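/- Let n ≥ 2 be an integer, let A be a symmetric n×n real matrix and let q ∈ ℝⁿ. Then | ‖Aq‖² − (tr A)·⟨Aq, q⟩ − (1/2)(‖A‖² − (tr A)²)·‖q‖² | ≤ ((n−2)/2)·(‖A‖²·‖q‖² − ‖Aq‖²). -/

import Mathlib

open Matrix Finset

-- Cauchy-Schwarz style bound on a finset
lemma abs_sq_sub_le {ι : Type*} (s : Finset ι) (f : ι → ℝ) :
    |(∑ i ∈ s, f i) ^ 2 - ∑ i ∈ s, f i ^ 2| ≤ ((s.card : ℝ) - 1) * ∑ i ∈ s, f i ^ 2 := by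
  set a := ∑ i ∈ s, f i with ha
  set b := ∑ i ∈ s, f i ^ 2 with hb
  have hbnn : 0 ≤ b := Finset.sum_nonneg fun i _ => sq_nonneg _
  have h1 : a ^ 2 ≤ (s.card : ℝ) * b := by
    have := Finset.sum_mul_sq_le_sq_mul_sq s f (fun _ => 1)
    simp only [mul_one, one_pow, Finset.sum_const, nsmul_eq_mul] at this
    calc a ^ 2 ≤ b * ((s.card : ℝ) * 1) := by simpa using this
    _ = (s.card : ℝ) * b := by ring
  have h2 : (2 - (s.card : ℝ)) * b ≤ a ^ 2 := by
    rcases Nat.lt_or_ge s.card 2 with hc | hc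
    · interval_cases h : s.card
      · obtain rfl : s = ∅ := Finset.card_eq_zero.mp h
        simp [ha, hb]
      · obtain ⟨j, rfl⟩ := Finset.card_eq_one.mp h
        simp [ha, hb]
        nlinarith [sq_nonneg (f j)]
    · have : (2 - (s.card : ℝ)) ≤ 0 := by
        have : (2:ℝ) ≤ s.card := by exact_mod_cast hc
        linarith
      nlinarith [sq_nonneg a]
  rw [abs_sub_le_iff]
  constructor <;> nlinarith

lemma pointwise_bound (n : ℕ) (hn : 2 ≤ n) (l : Fin n → ℝ) (i : Fin n) :
    |(l i) ^ 2 - (∑ j, l j) * l i - (1/2) * ((∑ j, (l j) ^ 2) - (∑ j, l j) ^ 2)|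
      ≤ ((n : ℝ) - 2) / 2 * ((∑ j, (l j) ^ 2) - (l i) ^ 2) := by
  set s := ∑ j ∈ {i}ᶜ, l j with hs
  set Q := ∑ j ∈ {i}ᶜ, (l j) ^ 2 with hQ
  have ht : (∑ j, l j) = s + l i := by
    rw [hs, ← Finset.sum_compl_add_sum {i} l]; simp
  have hS : (∑ j, (l j) ^ 2) = Q + (l i) ^ 2 := by
    rw [hQ, ← Finset.sum_compl_add_sum {i} (fun j => (l j) ^ 2)]; simp
  have hcard : (({i}ᶜ : Finset (Fin n)).card : ℝ) = (n : ℝ) - 1 := by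
    rw [Finset.card_compl]
    simp only [Finset.card_singleton, Fintype.card_fin]
    have h1 : 1 ≤ n := le_trans (by norm_num) hn
    push_cast [Nat.cast_sub h1]
    ring
  have key : |s ^ 2 - Q| ≤ ((n : ℝ) - 2) * Q := by
    have := abs_sq_sub_le ({i}ᶜ : Finset (Fin n)) l
    rw [hcard] at this
    calc |s ^ 2 - Q| ≤ ((n : ℝ) - 1 - 1) * Q := by simpa [hs, hQ] using this
    _ = ((n : ℝ) - 2) * Q := by ring
  have hexpr : (l i) ^ 2 - (∑ j, l j) * l i - (1/2) * ((∑ j, (l j) ^ 2) - (∑ j, l j) ^ 2)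
      = (s ^ 2 - Q) / 2 := by rw [ht, hS]; ring
  rw [hexpr, hS]
  rw [abs_div, abs_two]
  calc |s ^ 2 - Q| / 2 ≤ ((n : ℝ) - 2) * Q / 2 := by linarith
  _ = ((n : ℝ) - 2) / 2 * (Q + (l i) ^ 2 - (l i) ^ 2) := by ring

lemma key_scalar (n : ℕ) (hn : 2 ≤ n) (l c : Fin n → ℝ) :
    |(∑ i, (l i) ^ 2 * (c i) ^ 2) - (∑ i, l i) * (∑ i, l i * (c i) ^ 2)
        - (1/2) * ((∑ i, (l i) ^ 2) - (∑ i, l i) ^ 2) * (∑ i, (c i) ^ 2)|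
      ≤ ((n : ℝ) - 2) / 2 *
        ((∑ i, (l i) ^ 2) * (∑ i, (c i) ^ 2) - ∑ i, (l i) ^ 2 * (c i) ^ 2) := by
  set t := ∑ i, l i with htdef
  set S := ∑ i, (l i) ^ 2 with hSdef
  have lhs_eq : (∑ i, (l i) ^ 2 * (c i) ^ 2) - t * (∑ i, l i * (c i) ^ 2)
      - (1/2) * (S - t ^ 2) * (∑ i, (c i) ^ 2)
      = ∑ i, ((l i) ^ 2 - t * l i - (1/2) * (S - t ^ 2)) * (c i) ^ 2 := by
    simp only [sub_mul, Finset.sum_sub_distrib, Finset.mul_sum]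
    ring_nf
  have rhs_eq : ((n : ℝ) - 2) / 2 * (S * (∑ i, (c i) ^ 2) - ∑ i, (l i) ^ 2 * (c i) ^ 2)
      = ∑ i, ((n : ℝ) - 2) / 2 * (S - (l i) ^ 2) * (c i) ^ 2 := by
    simp only [sub_mul, mul_sub, Finset.sum_sub_distrib, Finset.mul_sum]
    ring_nf
  rw [lhs_eq, rhs_eq]
  calc |∑ i, ((l i) ^ 2 - t * l i - (1/2) * (S - t ^ 2)) * (c i) ^ 2|
      ≤ ∑ i, |((l i) ^ 2 - t * l i - (1/2) * (S - t ^ 2)) * (c i) ^ 2| :=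
        Finset.abs_sum_le_sum_abs _ _
    _ ≤ ∑ i, ((n : ℝ) - 2) / 2 * (S - (l i) ^ 2) * (c i) ^ 2 := by
        apply Finset.sum_le_sum
        intro i _
        rw [abs_mul, abs_of_nonneg (sq_nonneg (c i))]
        exact mul_le_mul_of_nonneg_right (pointwise_bound n hn l i) (sq_nonneg _)

theorem fundamental_algebraic_inequality
    (n : ℕ) (hn : 2 ≤ n) (A : Matrix (Fin n) (Fin n) ℝ) (hA : A.IsSymm) (q : Fin n → ℝ) :
    |(A.mulVec q ⬝ᵥ A.mulVec q) - A.trace * (A.mulVec q ⬝ᵥ q)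
        - (1 / 2) * ((∑ i, ∑ j, (A i j) ^ 2) - A.trace ^ 2) * (q ⬝ᵥ q)|
      ≤ ((n : ℝ) - 2) / 2 *
        ((∑ i, ∑ j, (A i j) ^ 2) * (q ⬝ᵥ q) - (A.mulVec q ⬝ᵥ A.mulVec q)) := by
  have hA' : A.IsHermitian := by
    rw [Matrix.IsHermitian, Matrix.conjTranspose_eq_transpose_of_trivial]; exact hA
  set U : Matrix (Fin n) (Fin n) ℝ := (hA'.eigenvectorUnitary : Matrix (Fin n) (Fin n) ℝ)
    with hUdef
  set l := hA'.eigenvalues with hl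
  have hUU : star U * U = 1 := Matrix.mem_unitaryGroup_iff'.mp hA'.eigenvectorUnitary.2
  have hUU' : U * star U = 1 := Matrix.mem_unitaryGroup_iff.mp hA'.eigenvectorUnitary.2
  have hUtU : Uᵀ * U = 1 := by
    rw [← Matrix.conjTranspose_eq_transpose_of_trivial, ← Matrix.star_eq_conjTranspose]
    exact hUU
  have hspec : A = U * diagonal l * star U := by
    have := hA'.spectral_theorem
    rwa [RCLike.ofReal_real_eq_id, Function.id_comp] at this
  have hAU : A * U = U * diagonal l := by
    rw [hspec, Matrix.mul_assoc, hUU, Matrix.mul_one]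
  set c := star U *ᵥ q with hc
  have hq : q = U *ᵥ c := by rw [hc, Matrix.mulVec_mulVec, hUU', Matrix.one_mulVec]
  have hdot : ∀ x y : Fin n → ℝ, (U *ᵥ x) ⬝ᵥ (U *ᵥ y) = x ⬝ᵥ y := by
    intro x y
    rw [dotProduct_mulVec, Matrix.vecMul_mulVec, hUtU, Matrix.vecMul_one]
  have cancel : ∀ X : Matrix (Fin n) (Fin n) ℝ, star U * (U * X) = X := fun X => by
    rw [← Matrix.mul_assoc, hUU, Matrix.one_mul]
  have hAq : A *ᵥ q = U *ᵥ (diagonal l *ᵥ c) := by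
    rw [hq, Matrix.mulVec_mulVec, hAU, ← Matrix.mulVec_mulVec]
  -- trace
  have htrace : A.trace = ∑ i, l i := by
    rw [hspec, Matrix.trace_mul_cycle, hUU, Matrix.one_mul, Matrix.trace_diagonal]
  -- Frobenius norm
  have hAA : A * A = U * diagonal (fun i => l i * l i) * star U := by
    rw [hspec]
    simp only [Matrix.mul_assoc]
    rw [cancel]
    congr 1
    rw [← Matrix.mul_assoc, Matrix.diagonal_mul_diagonal]
  have hfrob : (∑ i, ∑ j, (A i j) ^ 2) = ∑ i, (l i) ^ 2 := by
    have h1 : (∑ i, ∑ j, (A i j) ^ 2) = (A * A).trace := by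
      simp only [Matrix.trace, Matrix.diag, Matrix.mul_apply]
      refine Finset.sum_congr rfl fun i _ => Finset.sum_congr rfl fun j _ => ?_
      rw [hA.apply i j, pow_two]
    rw [h1, hAA, Matrix.trace_mul_cycle, hUU, Matrix.one_mul, Matrix.trace_diagonal]
    exact Finset.sum_congr rfl fun i _ => (pow_two (l i)).symm
  -- dot products
  have h2 : A.mulVec q ⬝ᵥ A.mulVec q = ∑ i, (l i) ^ 2 * (c i) ^ 2 := by
    rw [show A.mulVec q = A *ᵥ q from rfl, hAq, hdot]
    simp only [dotProduct, Matrix.mulVec_diagonal]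
    exact Finset.sum_congr rfl fun i _ => by ring
  have h3 : A.mulVec q ⬝ᵥ q = ∑ i, l i * (c i) ^ 2 := by
    rw [show A.mulVec q = A *ᵥ q from rfl, hAq]
    nth_rewrite 1 [hq]
    rw [hdot]
    simp only [dotProduct, Matrix.mulVec_diagonal]
    exact Finset.sum_congr rfl fun i _ => by ring
  have h4 : q ⬝ᵥ q = ∑ i, (c i) ^ 2 := by
    rw [hq, hdot]
    simp only [dotProduct]
    exact Finset.sum_congr rfl fun i _ => by ring
  rw [h2, h3, h4, htrace, hfrob]
  exact key_scalar n hn l c
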